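/- Let d ≥ 3 and θ > 0. Let 𝒬 be a family of cubes satisfying (G), and let ω : ℝ^d → ℝ be measurable with 0 < δ ≤ ω(x) ≤ 1 for all x and some δ > 0. There is a constant C > 0, depending only on d, θ and δ, such that every function 𝔞 for which there exist Q ∈ 𝒬 and a cube K ⊆ Q** with supp 𝔞 ⊆ K, 4 d_K ≥ d_Q, and ‖𝔞‖_∞ ≤ |K|^{-1}, belongs to H¹_at(𝒜_{ω,𝒬}) with ‖𝔞‖_{H¹_at(𝒜_{ω,𝒬})} ≤ C. -/

import Mathlib

open MeasureTheory Filter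
open scoped ENNReal

noncomputable section

/-- `ℝ^d` as a Euclidean space. -/
abbrev Rd (d : ℕ) := EuclideanSpace ℝ (Fin d)

/-- A cube in `ℝ^d`, given by its center and (positive) radius. -/
structure Cube (d : ℕ) where
  center : Rd d
  radius : ℝ
  radius_pos : 0 < radius

/-- The underlying open set of a cube: `Q(c,r) = {y : max_i |c_i - y_i| < r}`. -/
def Cube.carrier {d : ℕ} (Q : Cube d) : Set (Rd d) :=
  {y | ∀ i, |Q.center i - y i| < Q.radius}

/-- The diameter `d_Q = 2 √d · r_Q` of a cube. -/
def Cube.diam {d : ℕ} (Q : Cube d) : ℝ := 2 * Real.sqrt d * Q.radius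

/-- The `k`-fold enlargement `Q^{*k} = Q(c_Q, (1+θ)^k r_Q)` of a cube, as a set. -/
def Cube.starSet {d : ℕ} (Q : Cube d) (θ : ℝ) (k : ℕ) : Set (Rd d) :=
  {y | ∀ i, |Q.center i - y i| < (1 + θ) ^ k * Q.radius}

/-- The condition (G) on a family of cubes: it is countable, the closures cover `ℝ^d`,
distinct cubes overlap in measure zero, and cubes whose fourfold enlargements meet have
comparable diameters (with constant `CG`). -/
def SatG {d : ℕ} (θ CG : ℝ) (𝒬 : Set (Cube d)) : Prop :=
  𝒬.Countable ∧
  (⋃ Q ∈ 𝒬, closure Q.carrier) = Set.univ ∧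
  (∀ Q₁ ∈ 𝒬, ∀ Q₂ ∈ 𝒬, Q₁ ≠ Q₂ → volume (Q₁.carrier ∩ Q₂.carrier) = 0) ∧
  (∀ Q₁ ∈ 𝒬, ∀ Q₂ ∈ 𝒬, (Q₁.starSet θ 4 ∩ Q₂.starSet θ 4).Nonempty →
    CG⁻¹ * Q₁.diam ≤ Q₂.diam ∧ Q₂.diam ≤ CG * Q₁.diam)

/-- An `(ω,𝒬)`-atom: either a function supported in a cube `K ⊆ Q^{**}` (`Q ∈ 𝒬`) with
`‖a‖_∞ ≤ |K|⁻¹` and `∫_K a ω = 0`, or `a = |Q|⁻¹ χ_Q` for some `Q ∈ 𝒬`.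
Taking `ω ≡ 1` gives the notion of a `𝒬`-atom. -/
def IsWAtom {d : ℕ} (θ : ℝ) (𝒬 : Set (Cube d)) (ω : Rd d → ℝ) (a : Rd d → ℝ) : Prop :=
  Integrable a ∧
  ((∃ Q ∈ 𝒬, ∃ K : Cube d, K.carrier ⊆ Q.starSet θ 2 ∧
      Function.support a ⊆ K.carrier ∧
      (∀ᵐ x ∂volume, |a x| ≤ ((volume K.carrier).toReal)⁻¹) ∧
      ∫ x in K.carrier, a x * ω x = 0) ∨
    (∃ Q ∈ 𝒬, a = (Q.carrier).indicator (fun _ => ((volume Q.carrier).toReal)⁻¹)))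

/-- `f = ∑ λ_j a_j` is an atomic decomposition: all `a_j` are atoms (i.e. satisfy `𝒜`),
`∑ |λ_j| < ∞`, and the partial sums converge to `f` in `L¹`. -/
def IsDecomp {d : ℕ} (𝒜 : (Rd d → ℝ) → Prop) (f : Rd d → ℝ)
    (lam : ℕ → ℝ) (a : ℕ → Rd d → ℝ) : Prop :=
  (∀ j, 𝒜 (a j)) ∧ Summable (fun j => |lam j|) ∧
  Tendsto (fun N => ∫ x, |f x - ∑ j ∈ Finset.range N, lam j * a j x|) atTop (nhds 0)

/-- Membership in the atomic Hardy space `H¹_at(𝒜)`. -/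
def MemH1at {d : ℕ} (𝒜 : (Rd d → ℝ) → Prop) (f : Rd d → ℝ) : Prop :=
  ∃ lam a, IsDecomp 𝒜 f lam a

/-- The atomic norm `‖f‖_{H¹_at(𝒜)} = inf ∑ |λ_j|` over all atomic decompositions. -/
def H1atNorm {d : ℕ} (𝒜 : (Rd d → ℝ) → Prop) (f : Rd d → ℝ) : ℝ :=
  sInf {s | ∃ lam a, IsDecomp 𝒜 f lam a ∧ s = ∑' j, |lam j|}

/-! ### Auxiliary lemmas -/

lemma box_eq_preimage {d : ℕ} (c : Rd d) (r : ℝ) :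
    {y : Rd d | ∀ i, |c i - y i| < r} =
      (MeasurableEquiv.toLp 2 (Fin d → ℝ)).symm ⁻¹'
        (Set.univ.pi fun i => Set.Ioo (c i - r) (c i + r)) := by
  ext y
  simp [Set.mem_pi, abs_sub_lt_iff]
  constructor
  · intro h i; constructor <;> linarith [(h i).1, (h i).2]
  · intro h i; constructor <;> linarith [(h i).1, (h i).2]

lemma volume_box {d : ℕ} (c : Rd d) (r : ℝ) (hr : 0 < r) :
    volume {y : Rd d | ∀ i, |c i - y i| < r} = ENNReal.ofReal ((2*r)^d) := by
  rw [box_eq_preimage]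
  rw [(EuclideanSpace.volume_preserving_symm_measurableEquiv_toLp (Fin d)).measure_preimage
    (MeasurableSet.univ_pi (fun i => measurableSet_Ioo)).nullMeasurableSet]
  rw [volume_pi_pi]
  simp [Real.volume_Ioo]
  rw [← ENNReal.ofReal_pow (by linarith)]
  congr 1
  ring_nf

lemma measurableSet_box {d : ℕ} (c : Rd d) (r : ℝ) :
    MeasurableSet {y : Rd d | ∀ i, |c i - y i| < r} := by
  rw [box_eq_preimage]
  exact (MeasurableEquiv.toLp 2 (Fin d → ℝ)).symm.measurable
    (MeasurableSet.univ_pi (fun i => measurableSet_Ioo))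

lemma Cube.volume_carrier' {d : ℕ} (Q : Cube d) :
    volume Q.carrier = ENNReal.ofReal ((2*Q.radius)^d) :=
  volume_box _ _ Q.radius_pos

lemma Cube.measurableSet_carrier {d : ℕ} (Q : Cube d) : MeasurableSet Q.carrier :=
  measurableSet_box _ _

lemma Cube.volume_carrier_ne_top {d : ℕ} (Q : Cube d) : volume Q.carrier ≠ ⊤ := by
  rw [Q.volume_carrier']; exact ENNReal.ofReal_ne_top

lemma Cube.toReal_volume {d : ℕ} (Q : Cube d) :
    (volume Q.carrier).toReal = (2*Q.radius)^d := by
  have := Q.radius_pos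
  rw [Q.volume_carrier', ENNReal.toReal_ofReal (by positivity)]

lemma Cube.toReal_volume_pos {d : ℕ} (Q : Cube d) :
    0 < (volume Q.carrier).toReal := by
  rw [Q.toReal_volume]
  have := Q.radius_pos
  positivity

/-! ### Main theorem -/

set_option maxHeartbeats 1000000 in
/-- Remark 1: there is `C > 0`, depending only on `d`, `θ` and `δ`, such that
any function `𝔞` supported in a cube `K ⊆ Q^{**}` with `4 d_K ≥ d_Q` and `‖𝔞‖_∞ ≤ |K|⁻¹`
belongs to `H¹_at(𝒜_{ω,𝒬})` with norm at most `C`. -/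
theorem statement6 (d : ℕ) (hd : 3 ≤ d) (θ : ℝ) (hθ : 0 < θ) (δ : ℝ) (hδ : 0 < δ) :
    ∃ C > (0 : ℝ), ∀ CG : ℝ, 1 ≤ CG → ∀ 𝒬 : Set (Cube d), SatG θ CG 𝒬 →
      ∀ ω : Rd d → ℝ, Measurable ω → (∀ x, δ ≤ ω x ∧ ω x ≤ 1) →
      ∀ 𝔞 : Rd d → ℝ, Measurable 𝔞 →
      (∃ Q ∈ 𝒬, ∃ K : Cube d, K.carrier ⊆ Q.starSet θ 2 ∧ Q.diam ≤ 4 * K.diam ∧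
        Function.support 𝔞 ⊆ K.carrier ∧
        (∀ᵐ x ∂volume, |𝔞 x| ≤ ((volume K.carrier).toReal)⁻¹)) →
      MemH1at (IsWAtom θ 𝒬 ω) 𝔞 ∧ H1atNorm (IsWAtom θ 𝒬 ω) 𝔞 ≤ C := by
  set C₁ : ℝ := ((4:ℝ)^d + δ⁻¹) * (1+θ)^(2*d) with hC₁def
  have hC₁pos : 0 < C₁ := by positivity
  refine ⟨C₁ + δ⁻¹, by positivity, ?_⟩
  rintro CG hCG 𝒬 hG ω hωm hωb 𝔞 h𝔞m ⟨Q, hQ𝒬, K, hK2, hdiam, hsupp, hbound⟩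
  -- notation
  set vK : ℝ := (volume K.carrier).toReal with hvKdef
  set vQ : ℝ := (volume Q.carrier).toReal with hvQdef
  have hvKpos : 0 < vK := K.toReal_volume_pos
  have hvQpos : 0 < vQ := Q.toReal_volume_pos
  -- the big cube K' = Q**
  set K' : Cube d := ⟨Q.center, (1+θ)^(2:ℕ) * Q.radius,
    by have := Q.radius_pos; positivity⟩ with hK'def
  have hK'eq : K'.carrier = Q.starSet θ 2 := rfl
  set vK' : ℝ := (volume K'.carrier).toReal with hvK'def
  have hvK'pos : 0 < vK' := K'.toReal_volume_pos
  have hQsubK' : Q.carrier ⊆ K'.carrier := by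
    intro y hy i
    have := hy i
    have h1 : Q.radius ≤ (1+θ)^(2:ℕ) * Q.radius := by
      nlinarith [Q.radius_pos, sq_nonneg θ]
    exact lt_of_lt_of_le this h1
  have hKsubK' : K.carrier ⊆ K'.carrier := by rw [hK'eq]; exact hK2
  -- zero outside K
  have h𝔞zero : ∀ x ∉ K.carrier, 𝔞 x = 0 := fun x hx =>
    Function.support_subset_iff'.1 hsupp x hx
  -- the dominating function for 𝔞
  set gK : Rd d → ℝ := K.carrier.indicator (fun _ => vK⁻¹) with hgKdef
  have hgKint : Integrable gK := by
    rw [hgKdef, integrable_indicator_iff K.measurableSet_carrier]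
    exact integrableOn_const K.volume_carrier_ne_top
  have h𝔞le : ∀ᵐ x ∂volume, ‖𝔞 x‖ ≤ gK x := by
    filter_upwards [hbound] with x hx
    by_cases hxK : x ∈ K.carrier
    · rw [hgKdef]; rw [Set.indicator_of_mem hxK]; exact hx
    · rw [h𝔞zero x hxK, hgKdef, Set.indicator_of_notMem hxK]; simp
  have hInt𝔞 : Integrable 𝔞 :=
    Integrable.mono' hgKint h𝔞m.aestronglyMeasurable h𝔞le
  have hωabs : ∀ x, |ω x| ≤ 1 := by
    intro x
    rcases hωb x with ⟨h1, h2⟩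
    rw [abs_le]; constructor <;> nlinarith
  have hInt𝔞ω : Integrable (fun x => 𝔞 x * ω x) := by
    apply Integrable.mono' hgKint (h𝔞m.mul hωm).aestronglyMeasurable
    filter_upwards [h𝔞le] with x hx
    calc ‖𝔞 x * ω x‖ = ‖𝔞 x‖ * |ω x| := by rw [norm_mul]; rfl
    _ ≤ ‖𝔞 x‖ * 1 := by
        apply mul_le_mul_of_nonneg_left (hωabs x) (norm_nonneg _)
    _ = ‖𝔞 x‖ := mul_one _
    _ ≤ gK x := hx
  -- the second atom
  set a₂ : Rd d → ℝ := Q.carrier.indicator (fun _ => vQ⁻¹) with ha₂def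
  have hInta₂ : Integrable a₂ := by
    rw [ha₂def, integrable_indicator_iff Q.measurableSet_carrier]
    exact integrableOn_const Q.volume_carrier_ne_top
  have ha₂abs : ∀ x, |a₂ x| ≤ vQ⁻¹ := by
    intro x
    rw [ha₂def]
    by_cases hx : x ∈ Q.carrier
    · rw [Set.indicator_of_mem hx, abs_of_pos (by positivity)]
    · rw [Set.indicator_of_notMem hx]; simp; positivity
  have ha₂zero : ∀ x ∉ Q.carrier, a₂ x = 0 := by
    intro x hx; rw [ha₂def, Set.indicator_of_notMem hx]
  have hInta₂ω : Integrable (fun x => a₂ x * ω x) := by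
    apply Integrable.mono' (hInta₂.abs) (hInta₂.aestronglyMeasurable.mul hωm.aestronglyMeasurable)
    filter_upwards with x
    calc ‖a₂ x * ω x‖ = |a₂ x| * |ω x| := by rw [norm_mul]; rfl
    _ ≤ |a₂ x| * 1 := mul_le_mul_of_nonneg_left (hωabs x) (abs_nonneg _)
    _ = ‖|a₂ x|‖ := by rw [mul_one, Real.norm_eq_abs, abs_abs]
    _ ≤ |a₂ x| := le_of_eq (by rw [Real.norm_eq_abs, abs_abs])
  -- ω integral over Q
  have hωintQ : IntegrableOn ω Q.carrier :=
    Measure.integrableOn_of_bounded Q.volume_carrier_ne_top hωm.aestronglyMeasurable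
      (Filter.Eventually.of_forall fun x => by rw [Real.norm_eq_abs]; exact hωabs x)
  set wQ : ℝ := ∫ x in Q.carrier, ω x with hwQdef
  have hwQge : δ * vQ ≤ wQ := by
    have hconst : IntegrableOn (fun _ => δ) Q.carrier :=
      integrableOn_const Q.volume_carrier_ne_top
    have : ∫ x in Q.carrier, δ ∂volume ≤ ∫ x in Q.carrier, ω x :=
      setIntegral_mono_on hconst hωintQ Q.measurableSet_carrier (fun x _ => (hωb x).1)
    rwa [setIntegral_const, smul_eq_mul, mul_comm] at this
  have hwQpos : 0 < wQ := lt_of_lt_of_le (by positivity) hwQge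
  -- coefficients
  set lam1 : ℝ := ∫ x, 𝔞 x * ω x with hlam1def
  have hlam1 : |lam1| ≤ 1 := by
    have h1 : |lam1| ≤ ∫ x, ‖𝔞 x * ω x‖ := by
      rw [hlam1def, ← Real.norm_eq_abs]
      exact norm_integral_le_integral_norm _
    have h2 : ∫ x, ‖𝔞 x * ω x‖ ≤ ∫ x, gK x := by
      apply integral_mono_ae hInt𝔞ω.norm hgKint
      filter_upwards [h𝔞le] with x hx
      calc ‖𝔞 x * ω x‖ = ‖𝔞 x‖ * |ω x| := by rw [norm_mul]; rfl
      _ ≤ ‖𝔞 x‖ * 1 := mul_le_mul_of_nonneg_left (hωabs x) (norm_nonneg _)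
      _ = ‖𝔞 x‖ := mul_one _
      _ ≤ gK x := hx
    have h3 : ∫ x, gK x = 1 := by
      rw [hgKdef, integral_indicator_const _ K.measurableSet_carrier, smul_eq_mul, measureReal_def,
        ← hvKdef]
      field_simp
    linarith
  set μ : ℝ := lam1 * vQ / wQ with hμdef
  have hμle : |μ| ≤ δ⁻¹ := by
    rw [hμdef, abs_div, abs_mul, abs_of_pos hvQpos, abs_of_pos hwQpos]
    rw [div_le_iff₀ hwQpos]
    calc |lam1| * vQ ≤ 1 * vQ := by
          apply mul_le_mul_of_nonneg_right hlam1 (le_of_lt hvQpos)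
    _ = vQ := one_mul _
    _ ≤ δ⁻¹ * (δ * vQ) := by rw [← mul_assoc, inv_mul_cancel₀ (ne_of_gt hδ), one_mul]
    _ ≤ δ⁻¹ * wQ := by
          apply mul_le_mul_of_nonneg_left hwQge (by positivity)
  -- integral of a₂ ω
  have ha₂ωint : ∫ x, a₂ x * ω x = vQ⁻¹ * wQ := by
    have : (fun x => a₂ x * ω x) = Q.carrier.indicator (fun x => vQ⁻¹ * ω x) := by
      funext x
      by_cases hx : x ∈ Q.carrier
      · rw [ha₂def, Set.indicator_of_mem hx, Set.indicator_of_mem hx]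
      · rw [ha₂def, Set.indicator_of_notMem hx, Set.indicator_of_notMem hx, zero_mul]
    rw [this, integral_indicator Q.measurableSet_carrier, integral_const_mul, ← hwQdef]
  -- the first atom
  set g0 : Rd d → ℝ := fun x => 𝔞 x - μ * a₂ x with hg0def
  set a₀ : Rd d → ℝ := fun x => C₁⁻¹ * g0 x with ha₀def
  have hIntg0 : Integrable g0 := hInt𝔞.sub (hInta₂.const_mul μ)
  have hInta₀ : Integrable a₀ := hIntg0.const_mul _
  -- geometry
  have hsqrtd : (0:ℝ) < Real.sqrt d := Real.sqrt_pos.2 (by exact_mod_cast Nat.lt_of_lt_of_le (by norm_num) hd)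
  have hrQK : Q.radius ≤ 4 * K.radius := by
    have := hdiam
    rw [Cube.diam, Cube.diam] at this
    nlinarith
  have hvQle : vQ ≤ 4^d * vK := by
    rw [hvQdef, hvKdef, Q.toReal_volume, K.toReal_volume, ← mul_pow]
    apply pow_le_pow_left₀ (by linarith [Q.radius_pos])
    nlinarith [K.radius_pos]
  have hvK'eq : vK' = (1+θ)^(2*d) * vQ := by
    rw [hvK'def, hvQdef, K'.toReal_volume, Q.toReal_volume]
    show (2 * ((1+θ)^(2:ℕ) * Q.radius))^d = (1+θ)^(2*d) * (2*Q.radius)^d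
    rw [show 2 * ((1+θ)^(2:ℕ) * Q.radius) = (1+θ)^(2:ℕ) * (2*Q.radius) by ring,
      mul_pow, ← pow_mul]
  have hkey : vK⁻¹ + δ⁻¹ * vQ⁻¹ ≤ C₁ * vK'⁻¹ := by
    have h4d : (0:ℝ) < 4^d := by positivity
    have hC₁vK' : C₁ * vK'⁻¹ = ((4:ℝ)^d + δ⁻¹) * vQ⁻¹ := by
      rw [hvK'eq, hC₁def, mul_inv]
      have hne : ((1:ℝ)+θ)^(2*d) ≠ 0 := by positivity
      field_simp
    rw [hC₁vK']
    have hvKinv : vK⁻¹ ≤ 4^d * vQ⁻¹ := by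
      rw [show (4:ℝ)^d * vQ⁻¹ = (vQ / 4^d)⁻¹ by field_simp]
      apply inv_anti₀ (by positivity)
      rw [div_le_iff₀ h4d]
      linarith [hvQle]
    rw [add_mul]
    exact add_le_add hvKinv (le_refl _)
  -- a₀ is an atom
  have hAtom₀ : IsWAtom θ 𝒬 ω a₀ := by
    refine ⟨hInta₀, Or.inl ⟨Q, hQ𝒬, K', le_of_eq hK'eq, ?_, ?_, ?_⟩⟩
    · -- support
      intro x hx
      rw [Function.mem_support] at hx
      by_contra hxK'
      have hx𝔞 : 𝔞 x = 0 := h𝔞zero x (fun h => hxK' (hKsubK' h))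
      have hxa₂ : a₂ x = 0 := ha₂zero x (fun h => hxK' (hQsubK' h))
      apply hx
      rw [ha₀def]
      simp only [hg0def, hx𝔞, hxa₂, mul_zero, sub_zero, mul_zero]
    · -- size
      filter_upwards [hbound] with x hx
      rw [ha₀def]
      calc |C₁⁻¹ * g0 x| = C₁⁻¹ * |g0 x| := by
            rw [abs_mul, abs_of_pos (by positivity)]
      _ ≤ C₁⁻¹ * (vK⁻¹ + δ⁻¹ * vQ⁻¹) := by
            apply mul_le_mul_of_nonneg_left _ (by positivity)
            rw [hg0def]
            calc |𝔞 x - μ * a₂ x| ≤ |𝔞 x| + |μ * a₂ x| := abs_sub _ _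
            _ ≤ vK⁻¹ + δ⁻¹ * vQ⁻¹ := by
                apply add_le_add hx
                rw [abs_mul]
                apply mul_le_mul hμle (ha₂abs x) (abs_nonneg _) (by positivity)
      _ ≤ C₁⁻¹ * (C₁ * vK'⁻¹) := by
            apply mul_le_mul_of_nonneg_left hkey (by positivity)
      _ = vK'⁻¹ := by field_simp
    · -- cancellation
      have hzero : ∀ x ∉ K'.carrier, a₀ x * ω x = 0 := by
        intro x hx
        have hx𝔞 : 𝔞 x = 0 := h𝔞zero x (fun h => hx (hKsubK' h))
        have hxa₂ : a₂ x = 0 := ha₂zero x (fun h => hx (hQsubK' h))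
        rw [ha₀def]
        simp only [hg0def, hx𝔞, hxa₂, mul_zero, sub_zero, zero_mul, mul_zero]
      rw [setIntegral_eq_integral_of_forall_compl_eq_zero hzero]
      have : (fun x => a₀ x * ω x) = fun x => C₁⁻¹ * (𝔞 x * ω x - μ * (a₂ x * ω x)) := by
        funext x; rw [ha₀def, hg0def]; ring
      rw [this, integral_const_mul, integral_sub hInt𝔞ω (hInta₂ω.const_mul μ),
        integral_const_mul, ha₂ωint, ← hlam1def, hμdef]
      have : lam1 * vQ / wQ * (vQ⁻¹ * wQ) = lam1 := by
        field_simp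
      rw [this, sub_self, mul_zero]
  have hAtom₂ : IsWAtom θ 𝒬 ω a₂ := ⟨hInta₂, Or.inr ⟨Q, hQ𝒬, ha₂def⟩⟩
  -- the decomposition
  set lam : ℕ → ℝ := fun j => if j = 0 then C₁ else if j = 1 then μ else 0 with hlamdef
  set aa : ℕ → Rd d → ℝ := fun j => if j = 0 then a₀ else a₂ with haadef
  have hlamzero : ∀ j ∉ ({0, 1} : Finset ℕ), |lam j| = 0 := by
    intro j hj
    simp only [Finset.mem_insert, Finset.mem_singleton] at hj
    push_neg at hj
    rw [hlamdef]
    simp [hj.1, hj.2]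
  have hsumeq : ∀ N, 2 ≤ N → ∀ x, ∑ j ∈ Finset.range N, lam j * aa j x = 𝔞 x := by
    intro N hN x
    have hsub : Finset.range 2 ⊆ Finset.range N := Finset.range_subset_range.2 hN
    rw [← Finset.sum_subset hsub (fun j _ hj => ?_)]
    · rw [Finset.sum_range_succ, Finset.sum_range_succ, Finset.sum_range_zero]
      simp only [hlamdef, haadef, if_pos rfl, if_neg one_ne_zero, if_pos rfl, zero_add]
      rw [ha₀def]
      field_simp
      rw [hg0def]
      rw [if_pos trivial]
      ring
    · have hj0 : j ≠ 0 := by rintro rfl; exact hj (by simp)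
      have hj1 : j ≠ 1 := by rintro rfl; exact hj (by simp)
      rw [hlamdef]
      simp [hj0, hj1]
  have hdecomp : IsDecomp (IsWAtom θ 𝒬 ω) 𝔞 lam aa := by
    refine ⟨?_, ?_, ?_⟩
    · intro j
      rw [haadef]
      by_cases hj : j = 0 <;> simp [hj, hAtom₀, hAtom₂]
    · apply summable_of_ne_finset_zero (s := ({0, 1} : Finset ℕ))
      exact hlamzero
    · apply tendsto_atTop_of_eventually_const (i₀ := 2)
      intro N hN
      have : ∀ x, |𝔞 x - ∑ j ∈ Finset.range N, lam j * aa j x| = 0 := by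
        intro x; rw [hsumeq N hN x, sub_self, abs_zero]
      simp [this]
  refine ⟨⟨lam, aa, hdecomp⟩, ?_⟩
  -- norm bound
  have htsum : ∑' j, |lam j| = |C₁| + |μ| := by
    rw [tsum_eq_sum (s := ({0, 1} : Finset ℕ)) hlamzero]
    rw [Finset.sum_insert (by norm_num), Finset.sum_singleton]
    rw [hlamdef]
    norm_num
  have hle : H1atNorm (IsWAtom θ 𝒬 ω) 𝔞 ≤ ∑' j, |lam j| := by
    apply csInf_le
    · exact ⟨0, fun s ⟨l, b, _, hs⟩ => hs ▸ tsum_nonneg (fun j => abs_nonneg _)⟩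
    · exact ⟨lam, aa, hdecomp, rfl⟩
  refine le_trans hle ?_
  rw [htsum, abs_of_pos hC₁pos]
  exact add_le_add (le_refl _) hμle
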